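/- arXiv:math/9502208 — 2 statements merged into one kernel-verified Lean document; each statement's English description precedes it below -/
import Mathlib

section
/- In the Lie algebra g₇, an element U satisfies dim(ad(U)(g₇)) < 3 (that is, the image of the adjoint map ad(U) : g₇ → g₇ has dimension at most 2) if and only if U ∈ span{X₂, Y₁, Z₁, Z₂, W}. -/
noncomputable section

def br7 (u v : Fin 7 → ℝ) : Fin 7 → ℝ :=
  ![0, 0, 0, 0,
    u 0 * v 2 - u 2 * v 0 + (u 1 * v 3 - u 3 * v 1),
    u 0 * v 3 - u 3 * v 0,
    u 0 * v 4 - u 4 * v 0 + (u 1 * v 5 - u 5 * v 1) + (u 2 * v 3 - u 3 * v 2)]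

def X2 : Fin 7 → ℝ := Pi.single 1 1
def Y1 : Fin 7 → ℝ := Pi.single 2 1
def Z1 : Fin 7 → ℝ := Pi.single 4 1
def Z2 : Fin 7 → ℝ := Pi.single 5 1
def Wv : Fin 7 → ℝ := Pi.single 6 1

@[simp] lemma br7_app0 (u v : Fin 7 → ℝ) : br7 u v 0 = 0 := rfl
@[simp] lemma br7_app1 (u v : Fin 7 → ℝ) : br7 u v 1 = 0 := rfl
@[simp] lemma br7_app2 (u v : Fin 7 → ℝ) : br7 u v 2 = 0 := rfl
@[simp] lemma br7_app3 (u v : Fin 7 → ℝ) : br7 u v 3 = 0 := rfl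
@[simp] lemma br7_app4 (u v : Fin 7 → ℝ) :
    br7 u v 4 = u 0 * v 2 - u 2 * v 0 + (u 1 * v 3 - u 3 * v 1) := rfl
@[simp] lemma br7_app5 (u v : Fin 7 → ℝ) : br7 u v 5 = u 0 * v 3 - u 3 * v 0 := rfl
@[simp] lemma br7_app6 (u v : Fin 7 → ℝ) :
    br7 u v 6 = u 0 * v 4 - u 4 * v 0 + (u 1 * v 5 - u 5 * v 1) + (u 2 * v 3 - u 3 * v 2) := rfl

lemma mem_span_iff (U : Fin 7 → ℝ) :
    U ∈ Submodule.span ℝ {X2, Y1, Z1, Z2, Wv} ↔ U 0 = 0 ∧ U 3 = 0 := by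
  constructor
  · intro h
    constructor <;>
    · induction h using Submodule.span_induction with
      | mem x hx =>
        simp only [Set.mem_insert_iff, Set.mem_singleton_iff] at hx
        rcases hx with rfl | rfl | rfl | rfl | rfl <;>
          simp [X2, Y1, Z1, Z2, Wv, Pi.single_apply]
      | zero => simp
      | add x y _ _ hx hy => simp [hx, hy]
      | smul a x _ hx => simp [hx]
  · rintro ⟨h0, h3⟩
    have hU : U = U 1 • X2 + U 2 • Y1 + U 4 • Z1 + U 5 • Z2 + U 6 • Wv := by
      funext i
      fin_cases i <;> simp [X2, Y1, Z1, Z2, Wv, Pi.single_apply, h0, h3]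
    rw [hU]
    refine Submodule.add_mem _ (Submodule.add_mem _ (Submodule.add_mem _
      (Submodule.add_mem _ ?_ ?_) ?_) ?_) ?_ <;>
      exact Submodule.smul_mem _ _ (Submodule.subset_span (by simp))

lemma aux_ge (U : Fin 7 → ℝ) (v : Fin 3 → (Fin 7 → ℝ))
    (hv : ∀ i, v i ∈ Set.range (br7 U)) (li : LinearIndependent ℝ v) :
    3 ≤ Module.finrank ℝ ↥(Submodule.span ℝ (Set.range (br7 U))) := by
  have h1 : Submodule.span ℝ (Set.range v) ≤ Submodule.span ℝ (Set.range (br7 U)) :=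
    Submodule.span_le.2 (Set.range_subset_iff.2 fun i => Submodule.subset_span (hv i))
  calc (3 : ℕ) = Module.finrank ℝ ↥(Submodule.span ℝ (Set.range v)) := by
        rw [finrank_span_eq_card li]; simp
    _ ≤ _ := Submodule.finrank_mono h1

/-- In g₇: the image of ad(U) has dimension < 3 if and only if
U ∈ span{X₂, Y₁, Z₁, Z₂, W}. -/
theorem stmt10 (U : Fin 7 → ℝ) :
    Module.finrank ℝ ↥(Submodule.span ℝ (Set.range (br7 U))) < 3 ↔
      U ∈ Submodule.span ℝ {X2, Y1, Z1, Z2, Wv} := by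
  rw [mem_span_iff]
  constructor
  · intro h
    by_contra hc
    push_neg at hc
    have h3le : 3 ≤ Module.finrank ℝ ↥(Submodule.span ℝ (Set.range (br7 U))) := by
      rcases eq_or_ne (U 0) 0 with h0 | h0
      · have h3 : U 3 ≠ 0 := hc h0
        refine aux_ge U ![br7 U (Pi.single 0 1), br7 U (Pi.single 1 1), br7 U (Pi.single 2 1)]
          (by intro i; fin_cases i <;> exact ⟨_, rfl⟩) ?_
        rw [Fintype.linearIndependent_iff]
        intro g hg
        have e4 := congrFun hg 4
        have e5 := congrFun hg 5
        have e6 := congrFun hg 6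
        simp [Fin.sum_univ_three, Pi.single_apply, Matrix.cons_val_succ,
          Matrix.vecHead, Matrix.vecTail, h0] at e4 e5 e6
        have hg0 : g 0 = 0 := e5.resolve_right h3
        have hg1 : g 1 = 0 := by
          have h' : g 1 * U 3 = 0 := by linear_combination -e4 - U 2 * hg0
          exact (mul_eq_zero.1 h').resolve_right h3
        have hg2 : g 2 = 0 := by
          have h' : g 2 * U 3 = 0 := by linear_combination -e6 - U 4 * hg0 - U 5 * hg1
          exact (mul_eq_zero.1 h').resolve_right h3
        intro i; fin_cases i <;> assumption
      · refine aux_ge U ![br7 U (Pi.single 2 1), br7 U (Pi.single 3 1), br7 U (Pi.single 4 1)]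
          (by intro i; fin_cases i <;> exact ⟨_, rfl⟩) ?_
        rw [Fintype.linearIndependent_iff]
        intro g hg
        have e4 := congrFun hg 4
        have e5 := congrFun hg 5
        have e6 := congrFun hg 6
        simp [Fin.sum_univ_three, Pi.single_apply, Matrix.cons_val_succ,
          Matrix.vecHead, Matrix.vecTail] at e4 e5 e6
        have hg1 : g 1 = 0 := e5.resolve_right h0
        have hg0 : g 0 = 0 := by
          have h' : g 0 * U 0 = 0 := by linear_combination e4 - U 1 * hg1
          exact (mul_eq_zero.1 h').resolve_right h0
        have hg2 : g 2 = 0 := by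
          have h' : g 2 * U 0 = 0 := by linear_combination e6 + U 3 * hg0 - U 2 * hg1
          exact (mul_eq_zero.1 h').resolve_right h0
        intro i; fin_cases i <;> assumption
    omega
  · rintro ⟨h0, h3⟩
    have hle : Submodule.span ℝ (Set.range (br7 U)) ≤
        Submodule.span ℝ (Set.range ![Z1, Wv]) := by
      rw [Submodule.span_le]
      rintro _ ⟨v, rfl⟩
      have hv : br7 U v = (br7 U v 4) • Z1 + (br7 U v 6) • Wv := by
        funext i
        fin_cases i <;> simp [Z1, Wv, Pi.single_apply, h0, h3]
      rw [hv]
      exact Submodule.add_mem _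
        (Submodule.smul_mem _ _ (Submodule.subset_span ⟨0, rfl⟩))
        (Submodule.smul_mem _ _ (Submodule.subset_span ⟨1, rfl⟩))
    have h2 : Module.finrank ℝ ↥(Submodule.span ℝ (Set.range ![Z1, Wv])) ≤ 2 := by
      have := finrank_range_le_card (R := ℝ) ![Z1, Wv]
      simpa [Set.finrank] using this
    have := (Submodule.finrank_mono hle).trans h2
    omega
end
end

section
/- There is no Lie algebra automorphism Ψ of g₇ satisfying all of: Ψ(W) = εW for some ε ∈ {1, −1}; Ψ(Y₁) ∈ 2ε₁Y₁ + span{Z₁, Z₂, W} for some ε₁ ∈ {1, −1}; and Ψ(Y₂) ∈ 2ε₂Y₂ + span{Y₁, Z₁, Z₂, W} for some ε₂ ∈ {1, −1}. -/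
noncomputable section

def Y2 : Fin 7 → ℝ := Pi.single 3 1
lemma span_coord_zero (s : Set (Fin 7 → ℝ)) (i : Fin 7) (hs : ∀ q ∈ s, q i = 0) :
    ∀ p ∈ Submodule.span ℝ s, p i = 0 := by
  intro p hp
  have hle : Submodule.span ℝ s ≤
      LinearMap.ker (LinearMap.proj (R := ℝ) (φ := fun _ : Fin 7 => ℝ) i) := by
    rw [Submodule.span_le]
    intro q hq
    simpa using hs q hq
  simpa using hle hp

/-- There is no Lie algebra automorphism Ψ of g₇ with Ψ(W) = ±W,
Ψ(Y₁) ∈ ±2Y₁ + span{Z₁,Z₂,W}, and Ψ(Y₂) ∈ ±2Y₂ + span{Y₁,Z₁,Z₂,W}. -/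
theorem stmt11 :
    ¬ ∃ (Ψ : (Fin 7 → ℝ) → (Fin 7 → ℝ)) (ε ε₁ ε₂ : ℝ),
      IsLinearMap ℝ Ψ ∧ Function.Bijective Ψ ∧
      (∀ u v, Ψ (br7 u v) = br7 (Ψ u) (Ψ v)) ∧
      (ε = 1 ∨ ε = -1) ∧ (ε₁ = 1 ∨ ε₁ = -1) ∧ (ε₂ = 1 ∨ ε₂ = -1) ∧
      Ψ Wv = ε • Wv ∧
      Ψ Y1 - (2 * ε₁) • Y1 ∈ Submodule.span ℝ {Z1, Z2, Wv} ∧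
      Ψ Y2 - (2 * ε₂) • Y2 ∈ Submodule.span ℝ {Y1, Z1, Z2, Wv} := by
  rintro ⟨Ψ, ε, ε₁, ε₂, hlin, hbij, hbr, hε, hε₁, hε₂, hW, h1, h2⟩
  set u := Ψ Y1 with hu
  set v := Ψ Y2 with hv
  -- coordinate facts for u
  have hzero1 : ∀ i : Fin 7, Z1 i = 0 → Z2 i = 0 → Wv i = 0 →
      (u - (2 * ε₁) • Y1) i = 0 := by
    intro i hz1 hz2 hw
    refine span_coord_zero _ i ?_ _ h1
    rintro q hq
    simp only [Set.mem_insert_iff, Set.mem_singleton_iff] at hq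
    rcases hq with rfl | rfl | rfl <;> assumption
  have hzero2 : ∀ i : Fin 7, Y1 i = 0 → Z1 i = 0 → Z2 i = 0 → Wv i = 0 →
      (v - (2 * ε₂) • Y2) i = 0 := by
    intro i hy1 hz1 hz2 hw
    refine span_coord_zero _ i ?_ _ h2
    rintro q hq
    simp only [Set.mem_insert_iff, Set.mem_singleton_iff] at hq
    rcases hq with rfl | rfl | rfl | rfl <;> assumption
  have hu0 : u 0 = 0 := by
    have := hzero1 0 (by simp [Z1]) (by simp [Z2]) (by simp [Wv])
    simpa [Y1] using this
  have hu1 : u 1 = 0 := by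
    have := hzero1 1 (by simp [Z1]) (by simp [Z2]) (by simp [Wv])
    simpa [Y1] using this
  have hu2 : u 2 = 2 * ε₁ := by
    have := hzero1 2 (by simp [Z1]) (by simp [Z2]) (by simp [Wv])
    have h' : u 2 - 2 * ε₁ = 0 := by simpa [Y1] using this
    linarith
  have hu3 : u 3 = 0 := by
    have := hzero1 3 (by simp [Z1]) (by simp [Z2]) (by simp [Wv])
    simpa [Y1] using this
  have hv0 : v 0 = 0 := by
    have := hzero2 0 (by simp [Y1]) (by simp [Z1]) (by simp [Z2]) (by simp [Wv])
    simpa [Y2] using this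
  have hv1 : v 1 = 0 := by
    have := hzero2 1 (by simp [Y1]) (by simp [Z1]) (by simp [Z2]) (by simp [Wv])
    simpa [Y2] using this
  have hv3 : v 3 = 2 * ε₂ := by
    have := hzero2 3 (by simp [Y1]) (by simp [Z1]) (by simp [Z2]) (by simp [Wv])
    have h' : v 3 - 2 * ε₂ = 0 := by simpa [Y2] using this
    linarith
  -- bracket relation
  have hbrY : br7 Y1 Y2 = Wv := by
    funext i
    fin_cases i <;> (simp +decide [br7, Y1, Y2, Wv, Pi.single, Function.update]; try rfl)
  have hkey : Ψ Wv = br7 u v := by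
    rw [← hbrY]; exact hbr Y1 Y2
  have h6 : ε = br7 u v 6 := by
    have := congrFun hkey 6
    rw [hW] at this
    simpa [Wv] using this
  have hval : br7 u v 6 =
      u 0 * v 4 - u 4 * v 0 + (u 1 * v 5 - u 5 * v 1) + (u 2 * v 3 - u 3 * v 2) := rfl
  rw [hval, hu0, hu1, hu2, hu3, hv0, hv1, hv3] at h6
  ring_nf at h6
  rcases hε with rfl | rfl <;> rcases hε₁ with rfl | rfl <;> rcases hε₂ with rfl | rfl <;>
    norm_num at h6
end
end
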